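/- Let n ≥ 2, let x = (x₁,…,xₙ) ∈ ℤⁿ be nonzero, and let g = gcd(x₁,…,xₙ). Let b₁,…,b_{n−1} be any ℤ-basis of the submodule L⊥ₓ = {c ∈ ℤⁿ : Σᵢ cᵢxᵢ = 0}, and let B be the (n−1)×n integer matrix whose rows are b₁,…,b_{n−1}. Then g² · det(B·Bᵀ) = Σ_{i=1}^n xᵢ²; equivalently, the determinant (covolume) of the lattice L⊥ₓ equals ‖x‖₂ / g. -/

import Mathlib

/-- Bézout for finite gcds over ℤ: the gcd of a finite family is a ℤ-linear
combination of the family. -/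
lemma finset_gcd_bezout {ι : Type*} [DecidableEq ι] (s : Finset ι) (f : ι → ℤ) :
    ∃ c : ι → ℤ, ∑ i ∈ s, c i * f i = s.gcd f := by
  classical
  induction s using Finset.induction_on with
  | empty => exact ⟨0, by simp⟩
  | @insert a s ha ih =>
    obtain ⟨c, hc⟩ := ih
    obtain ⟨u, v, huv⟩ := exists_gcd_eq_mul_add_mul (f a) (s.gcd f)
    refine ⟨fun i => if i = a then u else v * c i, ?_⟩
    rw [Finset.gcd_insert, huv, Finset.sum_insert ha]
    have h1 : ∑ i ∈ s, (if i = a then u else v * c i) * f i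
        = v * ∑ i ∈ s, c i * f i := by
      rw [Finset.mul_sum]
      refine Finset.sum_congr rfl fun i hi => ?_
      have : i ≠ a := fun h => ha (h ▸ hi)
      simp [this, mul_assoc]
    rw [h1, hc]
    have h2 : (fun i => if i = a then u else v * c i) a = u := by simp
    rw [h2]
    ring

/-- For nonzero `x ∈ ℤⁿ` (n ≥ 2) with `g = gcd(x₁,…,xₙ)`: if `b₁,…,b_{n-1}` is any
ℤ-basis of the kernel lattice `L⊥ₓ = {c : ∑ i, cᵢ xᵢ = 0}` and `B` is the
`(n-1) × n` matrix whose rows are the `bᵢ`, then `g² · det (B * Bᵀ) = ∑ i, xᵢ²`,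
i.e. the covolume of `L⊥ₓ` is `‖x‖₂ / g`. -/
theorem kernel_lattice_determinant (n : ℕ) (hn : 2 ≤ n)
    (x : Fin n → ℤ) (hx : x ≠ 0)
    (g : ℤ) (hg : g = Finset.univ.gcd x)
    (K : Submodule ℤ (Fin n → ℤ))
    (hK : ∀ c : Fin n → ℤ, c ∈ K ↔ ∑ i, c i * x i = 0)
    (b : Module.Basis (Fin (n - 1)) ℤ K)
    (B : Matrix (Fin (n - 1)) (Fin n) ℤ)
    (hB : ∀ i j, B i j = (b i : Fin n → ℤ) j) :
    g ^ 2 * (B * B.transpose).det = ∑ i, (x i) ^ 2 := by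
  classical
  -- g ≠ 0
  have hg0 : g ≠ 0 := by
    intro h
    apply hx
    funext i
    exact Finset.gcd_eq_zero_iff.1 (h ▸ hg.symm) i (Finset.mem_univ i)
  -- the primitive vector y with x = g • y
  have hdvd : ∀ i, g ∣ x i := fun i => hg ▸ Finset.gcd_dvd (Finset.mem_univ i)
  set y : Fin n → ℤ := fun i => x i / g with hy
  have hxy : ∀ i, x i = g * y i := fun i => (Int.mul_ediv_cancel' (hdvd i)).symm
  -- Bézout: some v with ∑ v i * y i = 1
  obtain ⟨v, hv⟩ : ∃ v : Fin n → ℤ, ∑ i, v i * y i = 1 := by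
    obtain ⟨c, hc⟩ := finset_gcd_bezout Finset.univ x
    rw [← hg] at hc
    refine ⟨c, ?_⟩
    have h2 : g * ∑ i, c i * y i = ∑ i, c i * x i := by
      rw [Finset.mul_sum]
      exact Finset.sum_congr rfl fun i _ => by rw [hxy i]; ring
    rw [hc] at h2
    exact mul_left_cancel₀ hg0 (by rw [h2, mul_one])
  -- membership in K in terms of y
  have hKy : ∀ c : Fin n → ℤ, c ∈ K ↔ ∑ i, c i * y i = 0 := by
    intro c
    rw [hK]
    constructor
    · intro h
      apply mul_left_cancel₀ hg0
      rw [mul_zero, Finset.mul_sum, ← h]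
      exact Finset.sum_congr rfl fun i _ => by rw [hxy i]; ring
    · intro h
      have : ∑ i, c i * x i = g * ∑ i, c i * y i := by
        rw [Finset.mul_sum]
        exact Finset.sum_congr rfl fun i _ => by rw [hxy i]; ring
      rw [this, h, mul_zero]
  -- the linear functional c ↦ ∑ c i * y i
  set φ : (Fin n → ℤ) →ₗ[ℤ] ℤ := Fintype.linearCombination ℤ y with hφ
  have hφ_apply : ∀ c, φ c = ∑ i, c i * y i := fun c => by
    simp [hφ, Fintype.linearCombination_apply, smul_eq_mul]
  have hφv : φ v = 1 := by rw [hφ_apply]; exact hv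
  have hφb : ∀ i, φ (b i : Fin n → ℤ) = 0 := fun i => by
    rw [hφ_apply]; exact (hKy _).1 (b i).2
  -- t = ‖y‖²
  set t : ℤ := ∑ i, y i * y i with ht
  have hφy : φ y = t := by rw [hφ_apply]
  have ht0 : t ≠ 0 := by
    intro h
    apply hx
    funext i
    have hnn : ∀ j ∈ Finset.univ, (0:ℤ) ≤ y j * y j := fun j _ => mul_self_nonneg _
    have := (Finset.sum_eq_zero_iff_of_nonneg hnn).1 h i (Finset.mem_univ i)
    have hyi : y i = 0 := by nlinarith [this]
    rw [hxy i, hyi, mul_zero]; rfl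
  -- index equiv
  have hmn : n - 1 + 1 = n := by omega
  set e : (Fin (n-1) ⊕ Fin 1) ≃ Fin n := finSumFinEquiv.trans (finCongr hmn) with he
  -- the family w : rows b and v
  set w : (Fin (n-1) ⊕ Fin 1) → (Fin n → ℤ) :=
    Sum.elim (fun i => (b i : Fin n → ℤ)) (fun _ => v) with hw
  have hφw : ∀ p, φ (w p) = Sum.elim (fun _ => (0:ℤ)) (fun _ => 1) p := by
    rintro (i | u)
    · exact hφb i
    · exact hφv
  -- elements of K are in the span of the rows of b
  have hcoe : ∀ k : K, (k : Fin n → ℤ) = ∑ i, b.repr k i • (b i : Fin n → ℤ) := by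
    intro k
    have h := congrArg (K.subtype) (b.sum_repr k).symm
    rw [map_sum] at h
    simpa using h
  -- w is linearly independent
  have hli : LinearIndependent ℤ w := by
    rw [Fintype.linearIndependent_iff]
    intro d hd
    have hsum : ∑ i, d (Sum.inl i) • (b i : Fin n → ℤ) + d (Sum.inr 0) • v = 0 := by
      rw [← hd, Fintype.sum_sum_type]
      simp [hw]
    have hdr : d (Sum.inr 0) = 0 := by
      have := congrArg φ hsum
      rw [map_add, map_sum, map_smul, hφv, map_zero] at this
      simp only [map_smul, hφb, smul_zero, Finset.sum_const_zero, zero_add,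
        smul_eq_mul, mul_one] at this
      simpa using this
    have hsum2 : ∑ i, d (Sum.inl i) • (b i : Fin n → ℤ) = 0 := by
      rw [hdr, zero_smul, add_zero] at hsum; exact hsum
    have hK0 : (∑ i, d (Sum.inl i) • b i : K) = 0 := by
      apply Subtype.ext
      push_cast
      simpa using hsum2
    have hdl : ∀ i, d (Sum.inl i) = 0 :=
      Fintype.linearIndependent_iff.1 b.linearIndependent _ hK0
    rintro (i | u)
    · exact hdl i
    · have : u = 0 := Subsingleton.elim u 0
      rw [this]; exact hdr
  -- w spans
  have hsp : ⊤ ≤ Submodule.span ℤ (Set.range w) := by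
    intro c _
    rw [Submodule.mem_span_range_iff_exists_fun]
    have hmem : c - φ c • v ∈ K := by
      rw [hKy]
      have : ∑ i, (c - φ c • v) i * y i = (∑ i, c i * y i) - φ c * ∑ i, v i * y i := by
        rw [Finset.mul_sum, ← Finset.sum_sub_distrib]
        exact Finset.sum_congr rfl fun i _ => by simp; ring
      rw [this, hv, mul_one, ← hφ_apply, sub_self]
    set k : K := ⟨c - φ c • v, hmem⟩ with hk
    refine ⟨Sum.elim (fun i => b.repr k i) (fun _ => φ c), ?_⟩
    rw [Fintype.sum_sum_type]
    simp only [hw, Sum.elim_inl, Sum.elim_inr]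
    rw [← hcoe k, Fin.sum_univ_one]
    show (c - φ c • v) + φ c • v = c
    abel
  -- the basis of ℤⁿ
  set bb : Module.Basis (Fin (n-1) ⊕ Fin 1) ℤ (Fin n → ℤ) := Module.Basis.mk hli hsp with hbb
  have hbbw : ∀ p, bb p = w p := fun p => by rw [hbb, Module.Basis.coe_mk]
  -- the unimodular matrix Mn
  set Mn : Matrix (Fin n) (Fin n) ℤ := Matrix.of (fun i j => w (e.symm i) j) with hMn
  have hMnUnit : IsUnit Mn.det := by
    have h1 : IsUnit ((Pi.basisFun ℤ (Fin n)).toMatrix ⇑(bb.reindex e)).det := by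
      rw [← Module.Basis.det_apply]
      exact Module.Basis.isUnit_det _ _
    have h2 : (Pi.basisFun ℤ (Fin n)).toMatrix ⇑(bb.reindex e) = Mn.transpose := by
      ext i j
      rw [Module.Basis.toMatrix_apply, Pi.basisFun_repr, Module.Basis.coe_reindex]
      simp [hMn, hbbw]
    rw [h2, Matrix.det_transpose] at h1
    exact h1
  -- rows b and y
  set w2 : (Fin (n-1) ⊕ Fin 1) → (Fin n → ℤ) :=
    Sum.elim (fun i => (b i : Fin n → ℤ)) (fun _ => y) with hw2
  set M2n : Matrix (Fin n) (Fin n) ℤ := Matrix.of (fun i j => w2 (e.symm i) j) with hM2n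
  -- the coefficients expressing y in terms of w : y = (coe k) + t • v with k ∈ K
  have hymem : y - t • v ∈ K := by
    rw [hKy]
    have : ∑ i, (y - t • v) i * y i = (∑ i, y i * y i) - t * ∑ i, v i * y i := by
      rw [Finset.mul_sum, ← Finset.sum_sub_distrib]
      exact Finset.sum_congr rfl fun i _ => by simp; ring
    rw [this, hv, mul_one, ← ht, sub_self]
  set k0 : K := ⟨y - t • v, hymem⟩ with hk0
  set a : Fin (n-1) → ℤ := fun i => b.repr k0 i with ha
  have hya : y = (∑ i, a i • (b i : Fin n → ℤ)) + t • v := by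
    rw [ha, ← hcoe k0]
    show y = (y - t • v) + t • v
    abel
  -- the change of basis matrix C
  set C : Matrix (Fin (n-1) ⊕ Fin 1) (Fin (n-1) ⊕ Fin 1) ℤ :=
    Matrix.fromBlocks 1 0 (Matrix.of fun _ j => a j) (Matrix.of fun _ _ => t) with hC
  have hCdet : C.det = t := by
    rw [hC, Matrix.det_fromBlocks_zero₁₂, Matrix.det_one, one_mul, Matrix.det_fin_one]
    rfl
  -- M2n = C' * Mn
  have hM2C : M2n = (C.submatrix e.symm e.symm) * Mn := by
    ext i j
    rw [Matrix.mul_apply]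
    have hre : ∑ kk : Fin n, C.submatrix e.symm e.symm i kk * Mn kk j
        = ∑ p : Fin (n-1) ⊕ Fin 1, C (e.symm i) p * w p j :=
      Fintype.sum_equiv e.symm _ _ (fun kk => by simp [hMn])
    rw [hre]
    show w2 (e.symm i) j = _
    rcases hp : e.symm i with i' | u
    · rw [Fintype.sum_sum_type]
      simp only [hC, Matrix.fromBlocks_apply₁₁, Matrix.fromBlocks_apply₁₂,
        Matrix.zero_apply, zero_mul, Finset.sum_const_zero, add_zero]
      simp [Matrix.one_apply, ite_mul, hw, hw2]
    · rw [Fintype.sum_sum_type]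
      simp only [hC, Matrix.fromBlocks_apply₂₁, Matrix.fromBlocks_apply₂₂]
      rw [Fin.sum_univ_one]
      show y j = (∑ i'', a i'' * w (Sum.inl i'') j) + t * w (Sum.inr 0) j
      rw [hya]
      simp [hw, Finset.sum_apply]
  -- Gram matrix of M2n is block diagonal
  have hGram : M2n * M2n.transpose =
      (Matrix.fromBlocks (B * B.transpose) 0 0 (Matrix.of fun _ _ => t)).submatrix
        e.symm e.symm := by
    ext i j
    rw [Matrix.mul_apply, Matrix.submatrix_apply]
    have : ∀ kk, M2n i kk * M2n.transpose kk j = w2 (e.symm i) kk * w2 (e.symm j) kk :=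
      fun kk => rfl
    simp only [this]
    rcases hp : e.symm i with i' | u <;> rcases hq : e.symm j with j' | u'
    · simp only [Matrix.fromBlocks_apply₁₁, hw2, Sum.elim_inl]
      rw [Matrix.mul_apply]
      exact Finset.sum_congr rfl fun kk _ => by
        rw [Matrix.transpose_apply, hB, hB]
    · simp only [Matrix.fromBlocks_apply₁₂, Matrix.zero_apply, hw2, Sum.elim_inl,
        Sum.elim_inr]
      exact (hKy _).1 (b i').2
    · simp only [Matrix.fromBlocks_apply₂₁, Matrix.zero_apply, hw2, Sum.elim_inl,
        Sum.elim_inr]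
      rw [← (hKy _).1 (b j').2]
      exact Finset.sum_congr rfl fun kk _ => mul_comm _ _
    · simp only [Matrix.fromBlocks_apply₂₂, hw2, Sum.elim_inr]
      rfl
  -- compute determinants
  have hdet1 : (M2n * M2n.transpose).det = (B * B.transpose).det * t := by
    rw [hGram, Matrix.det_submatrix_equiv_self, Matrix.det_fromBlocks_zero₁₂,
      Matrix.det_fin_one]
    rfl
  have hdet2 : (M2n * M2n.transpose).det = t ^ 2 * Mn.det ^ 2 := by
    rw [Matrix.det_mul, Matrix.det_transpose, hM2C, Matrix.det_mul,
      Matrix.det_submatrix_equiv_self, hCdet]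
    ring
  have hMn1 : Mn.det ^ 2 = 1 := Int.isUnit_sq hMnUnit
  have hBt : (B * B.transpose).det = t := by
    have : (B * B.transpose).det * t = t * t := by
      rw [← hdet1, hdet2, hMn1, mul_one, sq]
    exact mul_right_cancel₀ ht0 this
  rw [hBt]
  rw [Finset.mul_sum]
  exact Finset.sum_congr rfl fun i _ => by rw [hxy i]; ring
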